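/- arXiv:2408.00815 — 5 statements merged into one kernel-verified Lean document; each statement's English description precedes it below -/
import Mathlib

section
/- There exists an edge coloring of the complete graph on 16 vertices in three colors containing no monochromatic triangle. Precisely: there exists a symmetric function c : Fin 16 → Fin 16 → Fin 3 such that there are no three pairwise distinct vertices x, y, z in Fin 16 with c x y = c y z = c x z. -/
def myf : Fin 16 → Fin 3 :=
  ![0, 0, 1, 1, 2, 2, 2, 1, 0, 2, 0, 1, 0, 1, 2, 0]

def myc (x y : Fin 16) : Fin 3 :=
  myf ⟨x.val ^^^ y.val, Nat.xor_lt_two_pow (n := 4) x.isLt y.isLt⟩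

theorem no_mono_triangle_K16 :
    ∃ c : Fin 16 → Fin 16 → Fin 3,
      (∀ x y, c x y = c y x) ∧
      ¬ ∃ x y z : Fin 16, x ≠ y ∧ y ≠ z ∧ x ≠ z ∧
        c x y = c y z ∧ c y z = c x z := by
  exact ⟨myc, by decide, by decide⟩
end

section
/- For every edge coloring of the complete graph on 17 vertices in three colors there exists at least one monochromatic triangle. Precisely: for every symmetric function c : Fin 17 → Fin 17 → Fin 3 there exist three pairwise distinct vertices x, y, z in Fin 17 with c x y = c y z = c x z. -/
lemma fin3_forced (a b x y : Fin 3) (hab : a ≠ b) (hx1 : x ≠ a) (hx2 : x ≠ b)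
    (hy1 : y ≠ a) (hy2 : y ≠ b) : x = y := by
  revert a b x y; decide

theorem mono_triangle_K17 :
    ∀ c : Fin 17 → Fin 17 → Fin 3,
      (∀ x y, c x y = c y x) →
      ∃ x y z : Fin 17, x ≠ y ∧ y ≠ z ∧ x ≠ z ∧
        c x y = c y z ∧ c y z = c x z := by
  intro c hsym
  by_contra h
  have hmono : ∀ x y z : Fin 17, x ≠ y → y ≠ z → x ≠ z →
      c x y = c y z → c y z = c x z → False := by
    intro x y z h1 h2 h3 h4 h5
    exact h ⟨x, y, z, h1, h2, h3, h4, h5⟩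
  -- Step 1: some color k appears on ≥ 6 edges from vertex 0
  set a : Fin 17 := 0 with ha
  have hstep1 : ∃ k ∈ (Finset.univ : Finset (Fin 3)),
      5 < ((Finset.univ.erase a).filter (fun v => c a v = k)).card := by
    apply Finset.exists_lt_card_fiber_of_mul_lt_card_of_maps_to
    · intro v _; exact Finset.mem_univ _
    · simp
  obtain ⟨k, -, hk⟩ := hstep1
  set t : Finset (Fin 17) := (Finset.univ.erase a).filter (fun v => c a v = k) with ht
  have hta : ∀ v ∈ t, v ≠ a ∧ c a v = k := by
    intro v hv
    rw [ht, Finset.mem_filter, Finset.mem_erase] at hv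
    exact ⟨hv.1.1, hv.2⟩
  -- no edge inside t has color k
  have hno : ∀ x ∈ t, ∀ y ∈ t, x ≠ y → c x y ≠ k := by
    intro x hx y hy hxy hcxy
    obtain ⟨hxa, hax⟩ := hta x hx
    obtain ⟨hya, hay⟩ := hta y hy
    exact hmono a x y (Ne.symm hxa) hxy (Ne.symm hya)
      (by rw [hax, hcxy]) (by rw [hcxy, hay])
  -- pick b in t
  have htcard : 5 < t.card := hk
  obtain ⟨b, hb⟩ := Finset.card_pos.mp (show 0 < t.card by omega)
  set t' : Finset (Fin 17) := t.erase b with ht'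
  have ht'card : 4 < t'.card := by
    rw [ht', Finset.card_erase_of_mem hb]; omega
  -- Step 2: edges from b to t' avoid k, so some color k' ≠ k on ≥ 3 of them
  have hstep2 : ∃ k' ∈ ({k}ᶜ : Finset (Fin 3)),
      2 < (t'.filter (fun v => c b v = k')).card := by
    apply Finset.exists_lt_card_fiber_of_mul_lt_card_of_maps_to
    · intro v hv
      rw [Finset.mem_compl, Finset.mem_singleton]
      exact hno b hb v (Finset.mem_of_mem_erase hv)
        (Ne.symm (Finset.ne_of_mem_erase hv))
    · have : ({k}ᶜ : Finset (Fin 3)).card = 2 := by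
        rw [Finset.card_compl, Finset.card_singleton]; simp
      omega
  obtain ⟨k', hk'mem, hk'⟩ := hstep2
  have hk'ne : k' ≠ k := by
    rw [Finset.mem_compl, Finset.mem_singleton] at hk'mem; exact hk'mem
  set u : Finset (Fin 17) := t'.filter (fun v => c b v = k') with hu
  have hub : ∀ v ∈ u, v ≠ b ∧ v ∈ t ∧ c b v = k' := by
    intro v hv
    rw [hu, Finset.mem_filter, ht', Finset.mem_erase] at hv
    exact ⟨hv.1.1, hv.1.2, hv.2⟩
  -- no edge inside u has color k'
  have hno' : ∀ x ∈ u, ∀ y ∈ u, x ≠ y → c x y ≠ k' := by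
    intro x hx y hy hxy hcxy
    obtain ⟨hxb, -, hbx⟩ := hub x hx
    obtain ⟨hyb, -, hby⟩ := hub y hy
    exact hmono b x y (Ne.symm hxb) hxy (Ne.symm hyb)
      (by rw [hbx, hcxy]) (by rw [hcxy, hby])
  -- take three distinct vertices of u
  obtain ⟨s, hsu, hs3⟩ := Finset.exists_subset_card_eq (s := u) (n := 3) (by omega)
  obtain ⟨x, y, z, hxy, hxz, hyz, hsxyz⟩ := Finset.card_eq_three.mp hs3
  have hxu : x ∈ u := hsu (by rw [hsxyz]; simp)
  have hyu : y ∈ u := hsu (by rw [hsxyz]; simp)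
  have hzu : z ∈ u := hsu (by rw [hsxyz]; simp)
  have hxt : x ∈ t := (hub x hxu).2.1
  have hyt : y ∈ t := (hub y hyu).2.1
  have hzt : z ∈ t := (hub z hzu).2.1
  -- all three edges avoid both k and k', hence are equal
  have e1 : c x y = c y z :=
    fin3_forced k k' _ _ (Ne.symm hk'ne) (hno x hxt y hyt hxy) (hno' x hxu y hyu hxy)
      (hno y hyt z hzt hyz) (hno' y hyu z hzu hyz)
  have e2 : c y z = c x z :=
    fin3_forced k k' _ _ (Ne.symm hk'ne) (hno y hyt z hzt hyz) (hno' y hyu z hzu hyz)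
      (hno x hxt z hzt hxz) (hno' x hxu z hzu hxz)
  exact hmono x y z hxy hyz hxz e1 e2
end

section
/- The Ramsey number R(3,3,3) equals 17. Precisely: 17 is the least natural number n such that every symmetric function c : Fin n → Fin n → Fin 3 admits three pairwise distinct vertices x, y, z with c x y = c y z = c x z. -/
/-- Color of a difference `d` (as a 4-bit XOR value), based on the partition of the
nonzero elements of GF(16) into cosets of the cubic residues, each of which is
sum-free under XOR. -/
def col3 (d : ℕ) : Fin 3 :=
  if d = 1 ∨ d = 8 ∨ d = 12 ∨ d = 10 ∨ d = 15 then 0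
  else if d = 2 ∨ d = 3 ∨ d = 11 ∨ d = 7 ∨ d = 13 then 1
  else 2

def g16 (x y : Fin 16) : Fin 3 := col3 (x.val ^^^ y.val)

lemma g16_symm : ∀ x y, g16 x y = g16 y x := by
  intro x y; unfold g16; rw [Nat.xor_comm]

lemma g16_no_triangle : ∀ x y z : Fin 16, x ≠ y → y ≠ z → x ≠ z →
    ¬(g16 x y = g16 y z ∧ g16 y z = g16 x z) := by decide

lemma fin3_eq : ∀ a b x y : Fin 3, a ≠ b → x ≠ a → x ≠ b → y ≠ a → y ≠ b → x = y := by
  decide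

theorem ramsey_three_three_three :
    IsLeast {n : ℕ | ∀ c : Fin n → Fin n → Fin 3,
      (∀ x y, c x y = c y x) →
      ∃ x y z : Fin n, x ≠ y ∧ y ≠ z ∧ x ≠ z ∧
        c x y = c y z ∧ c y z = c x z} 17 := by
  constructor
  · -- Upper bound: every 3-coloring of K₁₇ has a monochromatic triangle.
    intro c hsym
    by_contra h
    push_neg at h
    -- First pigeonhole: vertex 0 has 16 neighbors, some color class has ≥ 6.
    obtain ⟨a, -, ha⟩ :=
      Finset.exists_lt_card_fiber_of_mul_lt_card_of_maps_to
        (s := (Finset.univ.erase (0 : Fin 17))) (t := Finset.univ)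
        (f := fun x => c 0 x) (fun x _ => Finset.mem_univ _)
        (n := 5) (by simp)
    set S := (Finset.univ.erase (0 : Fin 17)).filter (fun x => c 0 x = a) with hSdef
    have hSmem : ∀ x ∈ S, x ≠ 0 ∧ c 0 x = a := by
      intro x hx
      simp only [hSdef, Finset.mem_filter, Finset.mem_erase] at hx
      exact ⟨hx.1.1, hx.2⟩
    by_cases hedge : ∃ x ∈ S, ∃ y ∈ S, x ≠ y ∧ c x y = a
    · obtain ⟨x, hx, y, hy, hxy, hcxy⟩ := hedge
      obtain ⟨hx0, hcx⟩ := hSmem x hx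
      obtain ⟨hy0, hcy⟩ := hSmem y hy
      exact h x 0 y hx0 (Ne.symm hy0) hxy
        (by rw [hsym x 0, hcx, hcy]) (by rw [hcy, hcxy])
    · push_neg at hedge
      -- S has ≥ 6 vertices, no edge inside S has color a.
      obtain ⟨u, hu⟩ := Finset.card_pos.mp (by omega : 0 < S.card)
      -- Second pigeonhole: u has ≥ 5 neighbors in S, colored with 2 colors.
      obtain ⟨b, hbmem, hb⟩ :=
        Finset.exists_lt_card_fiber_of_mul_lt_card_of_maps_to
          (s := S.erase u) (t := Finset.univ.erase a)
          (f := fun x => c u x)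
          (fun x hx => by
            rw [Finset.mem_erase] at hx ⊢
            exact ⟨hedge u hu x hx.2 (Ne.symm hx.1), Finset.mem_univ _⟩)
          (n := 2)
          (by
            have h1 : (Finset.univ.erase a).card = 2 := by
              rw [Finset.card_erase_of_mem (Finset.mem_univ _)]; simp
            have h2 : (S.erase u).card = S.card - 1 :=
              Finset.card_erase_of_mem hu
            omega)
      have hba : b ≠ a := (Finset.mem_erase.mp hbmem).1
      set T := (S.erase u).filter (fun x => c u x = b) with hTdef
      have hTmem : ∀ x ∈ T, x ∈ S ∧ x ≠ u ∧ c u x = b := by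
        intro x hx
        simp only [hTdef, Finset.mem_filter, Finset.mem_erase] at hx
        exact ⟨hx.1.2, hx.1.1, hx.2⟩
      by_cases hedge2 : ∃ x ∈ T, ∃ y ∈ T, x ≠ y ∧ c x y = b
      · obtain ⟨x, hx, y, hy, hxy, hcxy⟩ := hedge2
        obtain ⟨hxS, hxu, hcx⟩ := hTmem x hx
        obtain ⟨hyS, hyu, hcy⟩ := hTmem y hy
        exact h x u y hxu (Ne.symm hyu) hxy
          (by rw [hsym x u, hcx, hcy]) (by rw [hcy, hcxy])
      · push_neg at hedge2
        obtain ⟨x, hx, y, hy, z, hz, hxy, hxz, hyz⟩ := Finset.two_lt_card.mp hb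
        obtain ⟨hxS, -, -⟩ := hTmem x hx
        obtain ⟨hyS, -, -⟩ := hTmem y hy
        obtain ⟨hzS, -, -⟩ := hTmem z hz
        have e1 : c x y ≠ a := hedge x hxS y hyS hxy
        have e2 : c y z ≠ a := hedge y hyS z hzS hyz
        have e3 : c x z ≠ a := hedge x hxS z hzS hxz
        have f1 : c x y ≠ b := hedge2 x hx y hy hxy
        have f2 : c y z ≠ b := hedge2 y hy z hz hyz
        have f3 : c x z ≠ b := hedge2 x hx z hz hxz
        exact h x y z hxy hyz hxz
          (fin3_eq a b _ _ (Ne.symm hba) e1 f1 e2 f2)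
          (fin3_eq a b _ _ (Ne.symm hba) e2 f2 e3 f3)
  · -- Lower bound: for n ≤ 16 there is a triangle-free 3-coloring.
    intro n hn
    by_contra hlt
    push_neg at hlt
    have h16 : n ≤ 16 := by omega
    have := hn (fun x y => g16 (x.castLE h16) (y.castLE h16))
      (fun x y => g16_symm _ _)
    obtain ⟨x, y, z, hxy, hyz, hxz, h1, h2⟩ := this
    exact g16_no_triangle (x.castLE h16) (y.castLE h16) (z.castLE h16)
      (fun hc => hxy (Fin.castLE_injective h16 hc))
      (fun hc => hyz (Fin.castLE_injective h16 hc))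
      (fun hc => hxz (Fin.castLE_injective h16 hc))
      ⟨h1, h2⟩
end

section
/- The complete graph on 17 vertices with one edge removed admits an edge coloring in three colors with no monochromatic triangle. Precisely: there exist two distinct vertices a, b in Fin 17 and a symmetric function c : Fin 17 → Fin 17 → Fin 3 such that there are no three pairwise distinct vertices x, y, z in Fin 17, with {x, y, z} not containing both a and b, satisfying c x y = c y z = c x z. -/
def K17c : Fin 17 → Fin 17 → Fin 3 :=
  fun i j => (![
    ![0,0,1,1,2,2,2,1,0,2,0,1,0,1,2,0,0],
    ![0,0,1,1,2,2,1,2,2,0,1,0,1,0,0,2,2],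
    ![1,1,0,0,2,1,2,2,0,1,0,2,2,0,0,1,1],
    ![1,1,0,0,1,2,2,2,1,0,2,0,0,2,1,0,0],
    ![2,2,2,1,0,0,1,1,0,1,2,0,0,2,0,1,1],
    ![2,2,1,2,0,0,1,1,1,0,0,2,2,0,1,0,0],
    ![2,1,2,2,1,1,0,0,2,0,0,1,0,1,0,2,2],
    ![1,2,2,2,1,1,0,0,0,2,1,0,1,0,2,0,0],
    ![0,2,0,1,0,1,2,0,0,0,1,1,2,2,2,1,1],
    ![2,0,1,0,1,0,0,2,0,0,1,1,2,2,1,2,2],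
    ![0,1,0,2,2,0,0,1,1,1,0,0,2,1,2,2,2],
    ![1,0,2,0,0,2,1,0,1,1,0,0,1,2,2,2,2],
    ![0,1,2,0,0,2,0,1,2,2,2,1,0,0,1,1,1],
    ![1,0,0,2,2,0,1,0,2,2,1,2,0,0,1,1,1],
    ![2,0,0,1,0,1,0,2,2,1,2,2,1,1,0,0,0],
    ![0,2,1,0,1,0,2,0,1,2,2,2,1,1,0,0,0],
    ![0,2,1,0,1,0,2,0,1,2,2,2,1,1,0,0,0]] : Fin 17 → Fin 17 → Fin 3) i j

theorem K17c_good : ∀ x y z : Fin 17, ¬ (x ≠ y ∧ y ≠ z ∧ x ≠ z ∧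
    ¬ ((x = 15 ∨ y = 15 ∨ z = 15) ∧ (x = 16 ∨ y = 16 ∨ z = 16)) ∧
    K17c x y = K17c y z ∧ K17c y z = K17c x z) := by decide

theorem no_mono_triangle_K17_minus_edge :
    ∃ (a b : Fin 17) (c : Fin 17 → Fin 17 → Fin 3),
      a ≠ b ∧
      (∀ x y, c x y = c y x) ∧
      ¬ ∃ x y z : Fin 17, x ≠ y ∧ y ≠ z ∧ x ≠ z ∧
        ¬ (a ∈ ({x, y, z} : Set (Fin 17)) ∧ b ∈ ({x, y, z} : Set (Fin 17))) ∧
        c x y = c y z ∧ c y z = c x z := by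
  refine ⟨15, 16, K17c, by decide, by decide, ?_⟩
  rintro ⟨x, y, z, hxy, hyz, hxz, hab, h1, h2⟩
  simp only [Set.mem_insert_iff, Set.mem_singleton_iff] at hab
  exact K17c_good x y z ⟨hxy, hyz, hxz, by tauto, h1, h2⟩
end

section
/- There exists an edge coloring of the complete graph on 17 vertices in three colors whose monochromatic triangles all have the same color and number exactly 5. Precisely: there exist a symmetric function c : Fin 17 → Fin 17 → Fin 3 and a color k : Fin 3 such that every monochromatic triangle of c has color k, and the number of monochromatic triangles of c (counted as 3-element subsets of Fin 17) is exactly 5. -/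
def rTbl : List (Fin 3) := [0, 0, 1, 1, 2, 2, 2, 1, 0, 2, 0, 1, 0, 1, 2, 0, 1, 0, 0, 1, 1, 2, 2, 1, 2, 2, 0, 1, 0, 1, 0, 0, 2, 1, 1, 1, 0, 0, 2, 1, 2, 2, 0, 1, 0, 2, 2, 0, 0, 1, 0, 1, 1, 0, 0, 1, 2, 2, 2, 1, 0, 2, 0, 0, 2, 1, 0, 0, 2, 2, 2, 1, 0, 0, 1, 1, 0, 1, 2, 0, 0, 2, 0, 1, 1, 2, 2, 1, 2, 0, 0, 1, 1, 1, 0, 0, 2, 2, 0, 1, 0, 2, 2, 1, 2, 2, 1, 1, 0, 0, 2, 0, 0, 1, 0, 1, 0, 2, 2, 1, 2, 2, 2, 1, 1, 0, 0, 0, 2, 1, 0, 1, 0, 2, 0, 2, 0, 2, 0, 1, 0, 1, 2, 0, 0, 0, 1, 1, 2, 2, 2, 1, 1, 2, 0, 1, 0, 1, 0, 0, 2, 0, 0, 1, 1, 2, 2, 1, 2, 0, 0, 1, 0, 2, 2, 0, 0, 1, 1, 1, 0, 0, 2, 1, 2, 2, 2, 1, 0, 2, 0, 0, 2, 1, 0,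 1, 1, 0, 0, 1, 2, 2, 2, 0, 0, 1, 2, 0, 0, 2, 0, 1, 2, 2, 2, 1, 0, 0, 1, 1, 0, 1, 0, 0, 2, 2, 0, 1, 0, 2, 2, 1, 2, 0, 0, 1, 1, 2, 2, 0, 0, 1, 0, 1, 0, 2, 2, 1, 2, 2, 1, 1, 0, 0, 1, 0, 2, 1, 0, 1, 0, 2, 0, 1, 2, 2, 2, 1, 1, 0, 0, 0, 1, 1, 0, 0, 1, 2, 2, 2, 1, 0, 2, 0, 0, 2, 1, 0, 0]

def rC : Fin 17 → Fin 17 → Fin 3 := fun i j => (rTbl[i.val * 17 + j.val]?).getD 0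

def rTris : Finset (Finset (Fin 17)) :=
  {({2,3,16} : Finset (Fin 17)), {3,9,16}, {3,11,16}, {3,12,16}, {3,15,16}}

theorem exists_coloring_K17_exactly_five_mono_triangles_one_color :
    ∃ (c : Fin 17 → Fin 17 → Fin 3) (k : Fin 3),
      (∀ x y, c x y = c y x) ∧
      (∀ x y z : Fin 17, x ≠ y → y ≠ z → x ≠ z →
        c x y = c y z → c y z = c x z → c x y = k) ∧
      {s : Finset (Fin 17) | ∃ x y z : Fin 17, x ≠ y ∧ y ≠ z ∧ x ≠ z ∧
        s = {x, y, z} ∧ c x y = c y z ∧ c y z = c x z}.ncard = 5 := by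
  refine ⟨rC, 0, by decide, by decide, ?_⟩
  have hset : {s : Finset (Fin 17) | ∃ x y z : Fin 17, x ≠ y ∧ y ≠ z ∧ x ≠ z ∧
      s = {x, y, z} ∧ rC x y = rC y z ∧ rC y z = rC x z} = ↑rTris := by
    ext s
    constructor
    · rintro ⟨x, y, z, hxy, hyz, hxz, rfl, h1, h2⟩
      have key : ∀ x y z : Fin 17, x ≠ y → y ≠ z → x ≠ z →
          rC x y = rC y z → rC y z = rC x z →
          ({x, y, z} : Finset (Fin 17)) ∈ rTris := by decide
      exact_mod_cast key x y z hxy hyz hxz h1 h2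
    · intro hs
      simp only [rTris, Finset.coe_insert, Set.mem_insert_iff, Finset.coe_singleton,
        Set.mem_singleton_iff] at hs
      rcases hs with rfl | rfl | rfl | rfl | rfl
      · exact ⟨2, 3, 16, by decide, by decide, by decide, rfl, by decide, by decide⟩
      · exact ⟨3, 9, 16, by decide, by decide, by decide, rfl, by decide, by decide⟩
      · exact ⟨3, 11, 16, by decide, by decide, by decide, rfl, by decide, by decide⟩
      · exact ⟨3, 12, 16, by decide, by decide, by decide, rfl, by decide, by decide⟩
      · exact ⟨3, 15, 16, by decide, by decide, by decide, rfl, by decide, by decide⟩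
  rw [hset, Set.ncard_coe_finset]
  decide
end
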